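/- For every integer m ≥ 2, the formal power series H_m satisfies H_m · (1 − t·H_{m−1}) = t · (1 + H_{m−1}) in ℤ⟦t⟧; equivalently, H_m = t + t·H_{m−1} + t·H_{m−1}·H_m. -/

import Mathlib

/-- `H m` is the formal power series in `ℤ⟦t⟧` whose coefficient of `t^n` (for
`n ≥ 1`) is the number of words `w₁ ⋯ wₙ` with letters in `{1, …, m}` satisfying
`w_{i+1} ≤ w_i + 1` and `w_{i+1} ≠ w_i`, ending with `wₙ = m`; its constant
coefficient is `0`, and `H 0 = 0`. -/
noncomputable def H (m : ℕ) : PowerSeries ℤ :=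
  PowerSeries.mk fun n =>
    (Set.ncard {w : Fin n → ℕ |
      (∀ i, 1 ≤ w i ∧ w i ≤ m) ∧
      (∀ i : ℕ, ∀ h : i + 1 < n,
        w ⟨i + 1, h⟩ ≤ w ⟨i, by omega⟩ + 1 ∧ w ⟨i + 1, h⟩ ≠ w ⟨i, by omega⟩) ∧
      ∃ h : 0 < n, w ⟨n - 1, by omega⟩ = m} : ℤ)

open List Finset

def WRel (a b : ℕ) : Prop := b ≤ a + 1 ∧ b ≠ a

/-- The set of good lists of length `n`. -/
def LS (m n : ℕ) : Set (List ℕ) :=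
  {l | l.length = n ∧ (∀ x ∈ l, 1 ≤ x ∧ x ≤ m) ∧ l.Chain' WRel ∧ l.getLast? = some m}

lemma mem_LS_iff {m n : ℕ} {l : List ℕ} :
    l ∈ LS m n ↔ l.length = n ∧ (∀ x ∈ l, 1 ≤ x ∧ x ≤ m) ∧ l.Chain' WRel ∧
      l.getLast? = some m := Iff.rfl

lemma LS_zero (m : ℕ) : LS m 0 = ∅ := by
  ext l
  simp only [mem_LS_iff, Set.mem_empty_iff_false, iff_false, not_and, length_eq_zero_iff]
  rintro rfl _ _ h
  simp at h

lemma LS_one (m : ℕ) (hm : 1 ≤ m) : LS m 1 = {[m]} := by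
  ext l
  simp only [mem_LS_iff, Set.mem_singleton_iff]
  constructor
  · rintro ⟨hlen, hb, hc, hlast⟩
    rw [List.length_eq_one_iff] at hlen
    obtain ⟨a, rfl⟩ := hlen
    simp only [getLast?_singleton, Option.some.injEq] at hlast
    rw [hlast]
  · rintro rfl
    refine ⟨rfl, ?_, ?_, ?_⟩ <;> simp [hm, WRel, List.Chain']

lemma ne_nil_of_mem_LS {m n : ℕ} {l : List ℕ} (h : l ∈ LS m n) : l ≠ [] := by
  rintro rfl
  simpa using h.2.2.2
lemma mem_LS_ofFn (m n : ℕ) (w : Fin n → ℕ) :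
    List.ofFn w ∈ LS m n ↔
      ((∀ i, 1 ≤ w i ∧ w i ≤ m) ∧
      (∀ i : ℕ, ∀ h : i + 1 < n,
        w ⟨i + 1, h⟩ ≤ w ⟨i, by omega⟩ + 1 ∧ w ⟨i + 1, h⟩ ≠ w ⟨i, by omega⟩) ∧
      ∃ h : 0 < n, w ⟨n - 1, by omega⟩ = m) := by
  rw [mem_LS_iff]
  have hb : (∀ x ∈ List.ofFn w, 1 ≤ x ∧ x ≤ m) ↔ ∀ i, 1 ≤ w i ∧ w i ≤ m := by
    constructor
    · intro h i; exact h (w i) (by rw [List.mem_ofFn]; exact ⟨i, rfl⟩)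
    · rintro h x hx; rw [List.mem_ofFn] at hx; obtain ⟨i, rfl⟩ := hx; exact h i
  have hc : (List.ofFn w).Chain' WRel ↔
      (∀ i : ℕ, ∀ h : i + 1 < n,
        w ⟨i + 1, h⟩ ≤ w ⟨i, by omega⟩ + 1 ∧ w ⟨i + 1, h⟩ ≠ w ⟨i, by omega⟩) := by
    change List.IsChain _ _ ↔ _
    rw [List.isChain_iff_getElem]
    constructor
    · intro h i hi
      have := h i (by simpa using (by omega : i + 1 < n))
      rw [List.getElem_ofFn, List.getElem_ofFn] at this
      exact this
    · intro h i hi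
      rw [List.length_ofFn] at hi
      rw [List.getElem_ofFn, List.getElem_ofFn]
      exact h i (by omega)
  have hl : (List.ofFn w).getLast? = some m ↔ ∃ h : 0 < n, w ⟨n - 1, by omega⟩ = m := by
    rcases Nat.eq_zero_or_pos n with hn | hn
    · subst hn
      simp
    · have hne : List.ofFn w ≠ [] := by
        simp only [ne_eq, List.ofFn_eq_nil_iff]
        omega
      rw [List.getLast?_eq_getLast hne, List.getLast_ofFn]
      simp only [Option.some.injEq]
      exact ⟨fun h => ⟨hn, h⟩, fun h => h.2⟩
  constructor
  · rintro ⟨hlen, h1, h2, h3⟩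
    exact ⟨hb.1 h1, hc.1 h2, hl.1 h3⟩
  · rintro ⟨h1, h2, h3⟩
    exact ⟨by simp, hb.2 h1, hc.2 h2, hl.2 h3⟩

lemma ofFn_image (m n : ℕ) :
    List.ofFn '' {w : Fin n → ℕ |
      (∀ i, 1 ≤ w i ∧ w i ≤ m) ∧
      (∀ i : ℕ, ∀ h : i + 1 < n,
        w ⟨i + 1, h⟩ ≤ w ⟨i, by omega⟩ + 1 ∧ w ⟨i + 1, h⟩ ≠ w ⟨i, by omega⟩) ∧
      ∃ h : 0 < n, w ⟨n - 1, by omega⟩ = m} = LS m n := by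
  ext l
  constructor
  · rintro ⟨w, hw, rfl⟩
    exact (mem_LS_ofFn m n w).2 hw
  · intro hl
    have hlen := hl.1
    refine ⟨fun i => l.get (Fin.cast hlen.symm i), ?_, ?_⟩
    · rw [Set.mem_setOf_eq, ← mem_LS_ofFn]
      convert hl
      subst hlen
      exact List.ofFn_get l
    · subst hlen
      exact List.ofFn_get l

lemma funset_finite (m n : ℕ) :
    ({w : Fin n → ℕ |
      (∀ i, 1 ≤ w i ∧ w i ≤ m) ∧
      (∀ i : ℕ, ∀ h : i + 1 < n,
        w ⟨i + 1, h⟩ ≤ w ⟨i, by omega⟩ + 1 ∧ w ⟨i + 1, h⟩ ≠ w ⟨i, by omega⟩) ∧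
      ∃ h : 0 < n, w ⟨n - 1, by omega⟩ = m}).Finite := by
  apply Set.Finite.subset (Set.Finite.pi (fun _ : Fin n => Set.finite_Iic m))
  intro w hw
  simp only [Set.mem_pi, Set.mem_univ, Set.mem_Iic, forall_true_left]
  exact fun i => (hw.1 i).2

lemma LS_finite (m n : ℕ) : (LS m n).Finite := by
  rw [← ofFn_image]
  exact Set.Finite.image _ (funset_finite m n)

noncomputable def cc (m n : ℕ) : ℕ := (LS m n).ncard

lemma append_top_mem {k j : ℕ} {l : List ℕ} (h : l ∈ LS k j) :
    l ++ [k + 1] ∈ LS (k + 1) (j + 1) := by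
  obtain ⟨hlen, hb, hc, hlast⟩ := h
  refine ⟨by simp [hlen], ?_, ?_, List.getLast?_concat⟩
  · intro x hx
    rcases List.mem_append.1 hx with hx | hx
    · have := hb x hx; omega
    · simp only [List.mem_singleton] at hx; omega
  · change List.IsChain _ _
    rw [List.isChain_append]
    refine ⟨hc, List.isChain_singleton _, ?_⟩
    intro x hx y hy
    rw [hlast] at hx
    simp only [Option.mem_def, Option.some.injEq, List.head?_cons] at hx hy
    refine ⟨by omega, by omega⟩

lemma glue_mem {k a b : ℕ} {l₁ l₂ : List ℕ} (h₁ : l₁ ∈ LS (k + 1) a) (h₂ : l₂ ∈ LS k b) :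
    l₁ ++ (l₂ ++ [k + 1]) ∈ LS (k + 1) (a + b + 1) := by
  have h₂' := append_top_mem h₂
  have hne₂ : l₂ ≠ [] := ne_nil_of_mem_LS h₂
  obtain ⟨hlen₁, hb₁, hc₁, hlast₁⟩ := h₁
  obtain ⟨hlen₂, hb₂, hc₂, hlast₂⟩ := h₂'
  refine ⟨by simp [hlen₁] at *; omega, ?_, ?_, ?_⟩
  · intro x hx
    rcases List.mem_append.1 hx with h | h
    exacts [hb₁ x h, hb₂ x h]
  · change List.IsChain _ _
    rw [List.isChain_append]
    refine ⟨hc₁, hc₂, ?_⟩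
    intro x hx y hy
    rw [hlast₁] at hx
    obtain ⟨z, t, rfl⟩ := List.exists_cons_of_ne_nil hne₂
    simp only [Option.mem_def, Option.some.injEq, List.cons_append, List.head?_cons] at hx hy
    have hz := (h₂.2.1 z (by simp)).2
    refine ⟨by omega, by omega⟩
  · rw [← List.append_assoc]
    exact List.getLast?_concat

lemma decomp {k : ℕ} {l' : List ℕ}
    (hb : ∀ x ∈ l', 1 ≤ x ∧ x ≤ k + 1) (hc : l'.Chain' WRel)
    (hlast : l'.getLast? = some k) (hmem : (k + 1) ∈ l') :
    ∃ l₁ l₂, l' = l₁ ++ l₂ ∧ l₁ ∈ LS (k + 1) l₁.length ∧ l₂ ∈ LS k l₂.length := by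
  classical
  set p : ℕ → Bool := fun x => decide (x ≠ k + 1) with hp
  set r := l'.reverse with hr
  have heq : l' = (r.dropWhile p).reverse ++ (r.takeWhile p).reverse := by
    rw [← List.reverse_append, List.takeWhile_append_dropWhile, hr, List.reverse_reverse]
  have hdw : r.dropWhile p ≠ [] := by
    rw [Ne, List.dropWhile_eq_nil_iff]
    push_neg
    exact ⟨k + 1, by simpa [hr] using hmem, by simp [hp]⟩
  have hhead : (r.dropWhile p).head hdw = k + 1 := by
    have := List.head_dropWhile_not p hdw
    simpa [hp] using this
  have htw : r.takeWhile p ≠ [] := by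
    have hrh : r.head? = some k := by rw [hr, List.head?_reverse]; exact hlast
    obtain ⟨t, ht⟩ : ∃ t, r = k :: t := by
      cases h : r with
      | nil => rw [h] at hrh; simp at hrh
      | cons y t =>
        rw [h] at hrh; simp only [List.head?_cons, Option.some.injEq] at hrh
        exact ⟨t, by rw [hrh]⟩
    rw [ht, List.takeWhile_cons_of_pos (by simp [hp])]
    simp
  refine ⟨(r.dropWhile p).reverse, (r.takeWhile p).reverse, heq, ?_, ?_⟩
  · refine ⟨rfl, ?_, ?_, ?_⟩
    · intro x hx
      rw [List.mem_reverse] at hx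
      exact hb x (List.mem_reverse.1 ((List.dropWhile_sublist p).subset hx))
    · exact hc.prefix ⟨(r.takeWhile p).reverse, heq.symm⟩
    · rw [List.getLast?_reverse, List.head?_eq_head hdw, hhead]
  · refine ⟨rfl, ?_, ?_, ?_⟩
    · intro x hx
      rw [List.mem_reverse] at hx
      have hxne : x ≠ k + 1 := by
        have := List.mem_takeWhile_imp hx
        simpa [hp] using this
      have hxl : x ∈ l' := List.mem_reverse.1 ((List.takeWhile_prefix p).subset hx)
      have := hb x hxl
      omega
    · exact hc.suffix ⟨(r.dropWhile p).reverse, heq.symm⟩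
    · have : ((r.dropWhile p).reverse ++ (r.takeWhile p).reverse).getLast? =
          ((r.takeWhile p).reverse).getLast? := by
        rw [List.getLast?_append]
        cases h2 : ((r.takeWhile p).reverse).getLast? with
        | none => exact absurd (by simpa using h2) htw
        | some a => rfl
      rw [← this, ← heq, hlast]

lemma decomp_unique {k : ℕ} {l₁ l₂ l₁' l₂' : List ℕ}
    (e : l₁ ++ l₂ = l₁' ++ l₂')
    (h₁ : l₁.getLast? = some (k + 1)) (h₁' : l₁'.getLast? = some (k + 1))
    (h₂ : ∀ x ∈ l₂, x ≠ k + 1) (h₂' : ∀ x ∈ l₂', x ≠ k + 1) :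
    l₁ = l₁' ∧ l₂ = l₂' := by
  classical
  set p : ℕ → Bool := fun x => decide (x ≠ k + 1) with hp
  have key : ∀ (a b : List ℕ), a.getLast? = some (k + 1) → (∀ x ∈ b, x ≠ k + 1) →
      ((a ++ b).reverse.takeWhile p) = b.reverse := by
    intro a b ha hb2
    have hpos : ∀ x ∈ b.reverse, p x := by
      intro x hx
      simp only [hp, decide_eq_true_eq]
      exact hb2 x (List.mem_reverse.1 hx)
    rw [List.reverse_append, List.takeWhile_append_of_pos hpos]
    have hh : a.reverse.head? = some (k + 1) := by rw [List.head?_reverse]; exact ha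
    obtain ⟨t, ht⟩ : ∃ t, a.reverse = (k + 1) :: t := by
      cases h : a.reverse with
      | nil => rw [h] at hh; simp at hh
      | cons y t =>
        rw [h] at hh; simp only [List.head?_cons, Option.some.injEq] at hh
        exact ⟨t, by rw [hh]⟩
    rw [ht, List.takeWhile_cons_of_neg (by simp [hp]), List.append_nil]
  have e2 := congrArg (fun l => (List.reverse l).takeWhile p) e
  rw [key _ _ h₁ h₂, key _ _ h₁' h₂'] at e2
  have hb : l₂ = l₂' := by
    have := congrArg List.reverse e2; simpa using this
  subst hb
  exact ⟨(List.append_left_inj _).1 e, rfl⟩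

lemma dropLast_mem {k N : ℕ} {l : List ℕ} (h : l ∈ LS (k + 1) (N + 2)) :
    l.dropLast.length = N + 1 ∧ (∀ x ∈ l.dropLast, 1 ≤ x ∧ x ≤ k + 1) ∧
      l.dropLast.Chain' WRel ∧ l.dropLast.getLast? = some k ∧ l = l.dropLast ++ [k + 1] := by
  obtain ⟨hlen, hb, hc, hlast⟩ := h
  have hsplit : l = l.dropLast ++ [k + 1] := (List.dropLast_append_getLast? _ hlast).symm
  have hlen' : l.dropLast.length = N + 1 := by simp [List.length_dropLast, hlen]
  have hbd : ∀ x ∈ l.dropLast, 1 ≤ x ∧ x ≤ k + 1 :=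
    fun x hx => hb x ((List.dropLast_sublist l).subset hx)
  have hcd : l.dropLast.Chain' WRel := hc.prefix (List.dropLast_prefix l)
  have hne' : l.dropLast ≠ [] := by intro e; rw [e] at hlen'; simp at hlen'
  have hlink : WRel (l.dropLast.getLast hne') (k + 1) := by
    have hc2 := hsplit ▸ hc
    have := (List.isChain_append.1 hc2).2.2
    exact this _ (List.getLast?_eq_getLast hne') (k + 1) rfl
  have hlast' : l.dropLast.getLast? = some k := by
    rw [List.getLast?_eq_getLast hne']
    have hbL := hbd _ (List.getLast_mem hne')
    have h1 := hlink.1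
    have h2 := hlink.2
    congr 1
    omega
  exact ⟨hlen', hbd, hcd, hlast', hsplit⟩
def gmap (k N : ℕ) :
    (↥(LS k (N + 1)) ⊕
      Σ p : ↥(Finset.HasAntidiagonal.antidiagonal (N + 1)),
        ↥(LS k (p : ℕ × ℕ).1) × ↥(LS (k + 1) (p : ℕ × ℕ).2)) → ↥(LS (k + 1) (N + 2))
  | Sum.inl ⟨l, hl⟩ => ⟨l ++ [k + 1], append_top_mem hl⟩
  | Sum.inr ⟨p, (⟨l₂, h₂⟩, ⟨l₁, h₁⟩)⟩ => ⟨l₁ ++ (l₂ ++ [k + 1]), by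
      have hmem := glue_mem h₁ h₂
      have hp : (p : ℕ × ℕ).1 + (p : ℕ × ℕ).2 = N + 1 := Finset.HasAntidiagonal.mem_antidiagonal.1 p.2
      rwa [show (p : ℕ × ℕ).2 + (p : ℕ × ℕ).1 + 1 = N + 2 by omega] at hmem⟩

lemma gmap_bijective (k N : ℕ) : Function.Bijective (gmap k N) := by
  constructor
  · rintro (⟨l, hl⟩ | ⟨p, ⟨l₂, h₂⟩, ⟨l₁, h₁⟩⟩) (⟨l', hl'⟩ | ⟨q, ⟨l₂', h₂'⟩, ⟨l₁', h₁'⟩⟩) he <;>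
      simp only [gmap, Subtype.mk.injEq] at he
    · obtain rfl := (List.append_left_inj _).1 he
      rfl
    · exfalso
      rw [← List.append_assoc] at he
      obtain rfl := (List.append_left_inj _).1 he
      have hmem : (k + 1) ∈ l₁' := List.mem_of_mem_getLast? h₁'.2.2.2
      have := (hl.2.1 (k + 1) (List.mem_append_left _ hmem)).2
      omega
    · exfalso
      rw [← List.append_assoc] at he
      obtain rfl := ((List.append_left_inj _).1 he).symm
      have hmem : (k + 1) ∈ l₁ := List.mem_of_mem_getLast? h₁.2.2.2
      have := (hl'.2.1 (k + 1) (List.mem_append_left _ hmem)).2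
      omega
    · rw [← List.append_assoc, ← List.append_assoc] at he
      have e := (List.append_left_inj _).1 he
      have hu := decomp_unique e h₁.2.2.2 h₁'.2.2.2
        (fun x hx => by have := (h₂.2.1 x hx).2; omega)
        (fun x hx => by have := (h₂'.2.1 x hx).2; omega)
      obtain ⟨rfl, rfl⟩ := hu
      have hpq : p = q := by
        apply Subtype.ext
        apply Prod.ext
        · rw [← h₂.1, ← h₂'.1]
        · rw [← h₁.1, ← h₁'.1]
      subst hpq
      rfl
  · rintro ⟨l, hl⟩
    obtain ⟨hlen', hbd, hcd, hlast', hsplit⟩ := dropLast_mem hl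
    by_cases hmem : (k + 1) ∈ l.dropLast
    · obtain ⟨l₁, l₂, heq, h₁, h₂⟩ := decomp hbd hcd hlast' hmem
      have hpl : l₂.length + l₁.length = N + 1 := by
        have := congrArg List.length heq
        simp only [List.length_append] at this
        omega
      refine ⟨Sum.inr ⟨⟨(l₂.length, l₁.length), Finset.HasAntidiagonal.mem_antidiagonal.2 hpl⟩,
        (⟨l₂, h₂⟩, ⟨l₁, h₁⟩)⟩, ?_⟩
      apply Subtype.ext
      show l₁ ++ (l₂ ++ [k + 1]) = l
      rw [← List.append_assoc, ← heq, ← hsplit]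
    · have hl' : l.dropLast ∈ LS k (N + 1) := by
        refine ⟨hlen', ?_, hcd, hlast'⟩
        intro x hx
        have h1 := hbd x hx
        have h2 : x ≠ k + 1 := fun e => hmem (e ▸ hx)
        omega
      exact ⟨Sum.inl ⟨l.dropLast, hl'⟩, Subtype.ext hsplit.symm⟩

lemma nat_card_sigma {ι : Type} [Fintype ι] (F : ι → Type) [∀ i, Finite (F i)] :
    Nat.card ((i : ι) × F i) = ∑ i, Nat.card (F i) := by
  letI := fun i => Fintype.ofFinite (F i)
  simp only [Nat.card_eq_fintype_card]
  exact Fintype.card_sigma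

lemma cc_rec (k N : ℕ) :
    cc (k + 1) (N + 2) =
      cc k (N + 1) + ∑ p ∈ Finset.HasAntidiagonal.antidiagonal (N + 1), cc k p.1 * cc (k + 1) p.2 := by
  classical
  haveI : ∀ m n : ℕ, Finite ↥(LS m n) := fun m n => (LS_finite m n).to_subtype
  have h1 := Nat.card_eq_of_bijective _ (gmap_bijective k N)
  have h2 : Nat.card ↥(LS k (N + 1)) = cc k (N + 1) := Nat.card_coe_set_eq _
  have h3 : (Nat.card (Σ p : ↥(Finset.HasAntidiagonal.antidiagonal (N + 1)),
        ↥(LS k (p : ℕ × ℕ).1) × ↥(LS (k + 1) (p : ℕ × ℕ).2))) =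
      ∑ p ∈ Finset.HasAntidiagonal.antidiagonal (N + 1), cc k p.1 * cc (k + 1) p.2 := by
    rw [nat_card_sigma]
    rw [← Finset.sum_coe_sort (Finset.HasAntidiagonal.antidiagonal (N + 1))
      (fun p => cc k p.1 * cc (k + 1) p.2)]
    refine Finset.sum_congr rfl fun p _ => ?_
    rw [Nat.card_prod, Nat.card_coe_set_eq, Nat.card_coe_set_eq, cc, cc]
  rw [cc, ← Nat.card_coe_set_eq, ← h1, Nat.card_sum, h2, h3]
lemma cc_zero (m : ℕ) : cc m 0 = 0 := by simp [cc, LS_zero]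

lemma cc_one (m : ℕ) (hm : 1 ≤ m) : cc m 1 = 1 := by
  rw [cc, LS_one m hm, Set.ncard_singleton]

lemma coeff_H (m n : ℕ) : (PowerSeries.coeff n) (H m) = (cc m n : ℤ) := by
  rw [H, PowerSeries.coeff_mk]
  congr 1
  rw [cc, ← ofFn_image m n, Set.ncard_image_of_injective _ List.ofFn_injective]

theorem H_recurrence (m : ℕ) (hm : 2 ≤ m) :
    H m * (1 - PowerSeries.X * H (m - 1)) = PowerSeries.X * (1 + H (m - 1)) ∧
    H m = PowerSeries.X + PowerSeries.X * H (m - 1) +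
      PowerSeries.X * H (m - 1) * H m := by
  obtain ⟨k, rfl⟩ : ∃ k, m = k + 1 := ⟨m - 1, by omega⟩
  have hk : 1 ≤ k := by omega
  have hm1 : k + 1 - 1 = k := by omega
  rw [hm1]
  have h2 : H (k + 1) = PowerSeries.X + PowerSeries.X * H k +
      PowerSeries.X * H k * H (k + 1) := by
    ext n
    rw [map_add, map_add]
    match n with
    | 0 =>
      rw [coeff_H, cc_zero]
      simp [PowerSeries.coeff_zero_eq_constantCoeff, map_mul]
    | 1 =>
      rw [coeff_H, cc_one _ (by omega), PowerSeries.coeff_one_X]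
      have e1 : ∀ φ : PowerSeries ℤ, (PowerSeries.coeff 1) (PowerSeries.X * φ) =
          PowerSeries.coeff 0 φ := fun φ => PowerSeries.coeff_succ_X_mul 0 φ
      rw [mul_assoc, e1, e1, coeff_H, cc_zero]
      have hc0 : ∀ j : ℕ, (PowerSeries.constantCoeff) (H j) = 0 := fun j => by
        rw [← PowerSeries.coeff_zero_eq_constantCoeff_apply, coeff_H, cc_zero]
        simp
      rw [PowerSeries.coeff_zero_eq_constantCoeff_apply, map_mul, hc0]
      simp
    | (N + 2) =>
      rw [coeff_H, cc_rec k N, PowerSeries.coeff_X]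
      rw [mul_assoc]
      have e1 : ∀ φ : PowerSeries ℤ, (PowerSeries.coeff (N + 2)) (PowerSeries.X * φ) =
          PowerSeries.coeff (N + 1) φ := fun φ => PowerSeries.coeff_succ_X_mul (N + 1) φ
      rw [e1, e1, coeff_H, PowerSeries.coeff_mul]
      have e2 : ∀ p ∈ Finset.HasAntidiagonal.antidiagonal (N + 1),
          PowerSeries.coeff p.1 (H k) * PowerSeries.coeff p.2 (H (k + 1)) =
            (cc k p.1 : ℤ) * (cc (k + 1) p.2 : ℤ) := fun p _ => by rw [coeff_H, coeff_H]
      rw [Finset.sum_congr rfl e2]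
      push_cast
      simp
  refine ⟨by linear_combination h2, h2⟩
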